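/- For every integer i ≥ 2 and every real number ε with 0 ≤ ε < 1/i, there exists a finite set P ⊂ ℝ² such that for every set N ⊆ ℝ² with |N| ≤ i there exists a closed disk D with D ∩ N = ∅ and |D ∩ P| > ε·|P|. Hence ε_i^D ≥ 1/i for weak ε-nets with respect to disks, for all i ≥ 2. -/

import Mathlib

open Real
open scoped RealInnerProductSpace

/-! ### Auxiliary lemmas about `Real.Angle` (circular distance) -/

lemma abs_toReal_le_abs_rep (x : ℝ) : |((x : Real.Angle)).toReal| ≤ |x| := by
  rcases le_or_gt |x| π with hle | hgt
  · rcases eq_or_lt_of_le (neg_le_of_abs_le hle) with h | h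
    · have hx : x = -π := h.symm
      subst hx
      have hc : ((-π : ℝ) : Real.Angle) = ((π : ℝ) : Real.Angle) := by
        rw [Real.Angle.coe_neg, Real.Angle.neg_coe_pi]
      rw [hc, Real.Angle.toReal_pi, abs_neg]
    · have : ((x : Real.Angle)).toReal = x :=
        Real.Angle.toReal_coe_eq_self_iff.2 ⟨h, le_of_abs_le hle⟩
      rw [this]
  · exact le_trans (Real.Angle.abs_toReal_le_pi _) hgt.le

lemma abs_toReal_add_le (x y : ℝ) :
    |(((x + y : ℝ)) : Real.Angle).toReal| ≤
      |((x : Real.Angle)).toReal| + |((y : Real.Angle)).toReal| := by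
  set x' := ((x : Real.Angle)).toReal with hx'
  set y' := ((y : Real.Angle)).toReal with hy'
  have hrep : ((x + y : ℝ) : Real.Angle) = ((x' + y' : ℝ) : Real.Angle) := by
    rw [Real.Angle.coe_add, Real.Angle.coe_add, hx', hy',
      Real.Angle.coe_toReal, Real.Angle.coe_toReal]
  calc |(((x + y : ℝ)) : Real.Angle).toReal| = |(((x' + y' : ℝ)) : Real.Angle).toReal| := by
        rw [hrep]
    _ ≤ |x' + y'| := abs_toReal_le_abs_rep _
    _ ≤ |x'| + |y'| := abs_add_le _ _

lemma le_abs_toReal_of_mem (y c : ℝ) (hc : 0 ≤ c) (h1 : c ≤ y) (h2 : y ≤ 2 * π - c) :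
    c ≤ |((y : Real.Angle)).toReal| := by
  rcases le_or_gt y π with hle | hgt
  · have : ((y : Real.Angle)).toReal = y :=
      Real.Angle.toReal_coe_eq_self_iff.2 ⟨by nlinarith [Real.pi_pos], hle⟩
    rw [this, abs_of_nonneg (hc.trans h1)]; exact h1
  · have hco : ((y : Real.Angle)) = (((y - 2 * π) : ℝ) : Real.Angle) := by
      rw [Real.Angle.angle_eq_iff_two_pi_dvd_sub]
      exact ⟨1, by ring⟩
    have hmem : ((y - 2 * π : ℝ) : Real.Angle).toReal = y - 2 * π := by
      apply Real.Angle.toReal_coe_eq_self_iff.2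
      constructor
      · linarith
      · nlinarith [Real.pi_pos]
    rw [hco, hmem]
    rw [abs_of_nonpos (by linarith)]
    linarith

lemma cos_le_cos_of_circ (x d : ℝ) (hd0 : 0 ≤ d) (hd : d ≤ |((x : Real.Angle)).toReal|) :
    Real.cos x ≤ Real.cos d := by
  have h1 : Real.cos x = Real.cos (((x : Real.Angle)).toReal) := by
    conv_lhs => rw [← Real.Angle.cos_coe]
    rw [← Real.Angle.cos_toReal]
  rw [h1, ← Real.cos_abs]
  exact Real.cos_le_cos_of_nonneg_of_le_pi hd0 (Real.Angle.abs_toReal_le_pi _) hd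

lemma abs_toReal_neg (y : ℝ) :
    |(((-y : ℝ)) : Real.Angle).toReal| = |((y : Real.Angle)).toReal| := by
  have key : ∀ z : ℝ, |(((-z : ℝ)) : Real.Angle).toReal| ≤ |((z : Real.Angle)).toReal| := by
    intro z
    have hrep : ((-z : ℝ) : Real.Angle) = ((-(((z : Real.Angle)).toReal) : ℝ) : Real.Angle) := by
      rw [Real.Angle.coe_neg, Real.Angle.coe_neg, Real.Angle.coe_toReal]
    rw [hrep]
    calc |((-(((z : Real.Angle)).toReal) : ℝ) : Real.Angle).toReal|
        ≤ |(-(((z : Real.Angle)).toReal))| := abs_toReal_le_abs_rep _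
      _ = |((z : Real.Angle)).toReal| := abs_neg _
  have h1 := key y
  have h2 := key (-y)
  rw [neg_neg] at h2
  exact le_antisymm h1 h2

/-! ### Choosing a direction far (in circular distance) from at most `i` given directions -/

lemma dir_exists (i : ℕ) (hi : 1 ≤ i) (B : Finset ℝ) (hB : B.card ≤ i) :
    ∃ α : ℝ, ∀ β ∈ B, Real.cos (α - β) ≤ Real.cos (π / i) := by
  rcases B.eq_empty_or_nonempty with rfl | hne
  · exact ⟨0, by simp⟩
  have hipos : (0:ℝ) < i := by exact_mod_cast hi
  have hine : (i:ℝ) ≠ 0 := hipos.ne'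
  have hpi := Real.pi_pos
  set β₀ := B.min' hne with hβ₀
  set a : ℕ → ℝ := fun k => β₀ + π / i + 2 * π * k / i with ha
  have base : ∀ k k' : ℕ, k' < k → k < i →
      2 * π / i ≤ |(((a k - a k' : ℝ)) : Real.Angle).toReal| := by
    intro k k' hlt hki
    have hval : a k - a k' = 2 * π * ((k - k' : ℕ) : ℝ) / i := by
      simp only [ha]
      push_cast [Nat.cast_sub hlt.le]
      ring
    have hm1 : (1:ℝ) ≤ ((k - k' : ℕ) : ℝ) := by exact_mod_cast (by omega : 1 ≤ k - k')
    have hm2 : ((k - k' : ℕ) : ℝ) ≤ (i:ℝ) - 1 := by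
      have : ((k - k':ℕ):ℝ) + 1 ≤ (i:ℝ) := by exact_mod_cast (by omega : (k - k') + 1 ≤ i)
      linarith
    rw [hval]
    apply le_abs_toReal_of_mem _ _ (by positivity)
    · rw [div_le_div_iff_of_pos_right hipos]
      nlinarith
    · rw [div_le_iff₀ hipos]
      have hkey : (2 * π / i) * i = 2 * π := by field_simp
      nlinarith
  have hsep : ∀ k ∈ Finset.range i, ∀ k' ∈ Finset.range i, k ≠ k' →
      2 * π / i ≤ |(((a k - a k' : ℝ)) : Real.Angle).toReal| := by
    intro k hk k' hk' hne'
    simp only [Finset.mem_range] at hk hk'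
    rcases lt_or_gt_of_ne hne' with h | h
    · have := base k' k h hk'
      rw [← abs_toReal_neg (a k' - a k), neg_sub] at this
      exact this
    · exact base k k' h hk
  have hanchor : ∀ k ∈ Finset.range i,
      π / i ≤ |(((a k - β₀ : ℝ)) : Real.Angle).toReal| := by
    intro k hk
    simp only [Finset.mem_range] at hk
    have hval : a k - β₀ = π / i + 2 * π * k / i := by simp [ha]; ring
    have hk1 : ((k:ℝ) + 1) ≤ (i:ℝ) := by exact_mod_cast (by omega : k + 1 ≤ i)
    have hk0 : (0:ℝ) ≤ (k:ℝ) := Nat.cast_nonneg k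
    rw [hval]
    apply le_abs_toReal_of_mem _ _ (by positivity)
    · nlinarith [div_nonneg (by positivity : (0:ℝ) ≤ 2*π*k) hipos.le]
    · rw [← sub_nonneg]
      have e : 2 * π - π/i - (π / i + 2 * π * k / i) = (2*π*(i - 1 - k))/i := by
        field_simp; ring
      rw [e]
      apply div_nonneg _ hipos.le
      nlinarith
  by_contra hcon
  push_neg at hcon
  have hblocked : ∀ k ∈ Finset.range i, ∃ β ∈ B,
      |(((a k - β : ℝ)) : Real.Angle).toReal| < π / i := by
    intro k _
    obtain ⟨β, hβB, hβ⟩ := hcon (a k)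
    refine ⟨β, hβB, ?_⟩
    by_contra hge
    push_neg at hge
    have := cos_le_cos_of_circ (a k - β) (π/i) (by positivity) hge
    linarith
  classical
  set f : ℕ → ℝ := fun k =>
    if h : ∃ β ∈ B, |(((a k - β : ℝ)) : Real.Angle).toReal| < π / i then h.choose else 0
    with hf
  have hfspec : ∀ k ∈ Finset.range i,
      f k ∈ B ∧ |(((a k - f k : ℝ)) : Real.Angle).toReal| < π / i := by
    intro k hk
    obtain h := hblocked k hk
    simp only [hf, dif_pos h]
    exact ⟨h.choose_spec.1, h.choose_spec.2⟩
  have hmaps : ∀ k ∈ Finset.range i, f k ∈ B.erase β₀ := by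
    intro k hk
    obtain ⟨h1, h2⟩ := hfspec k hk
    refine Finset.mem_erase.2 ⟨?_, h1⟩
    intro heq
    rw [heq] at h2
    exact absurd (hanchor k hk) (not_le.2 h2)
  have hinj : Set.InjOn f (Finset.range i) := by
    intro k hk k' hk' heq
    by_contra hne'
    have h1 := (hfspec k hk).2
    have h2 := (hfspec k' hk').2
    rw [heq] at h1
    have htri : |(((a k - a k' : ℝ)) : Real.Angle).toReal| ≤
        |(((a k - f k' : ℝ)) : Real.Angle).toReal| +
        |(((f k' - a k' : ℝ)) : Real.Angle).toReal| := by
      have := abs_toReal_add_le (a k - f k') (f k' - a k')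
      simpa using this
    rw [← abs_toReal_neg (f k' - a k'), neg_sub] at htri
    have hs := hsep k hk k' hk' hne'
    have hsum : |(((a k - f k' : ℝ)) : Real.Angle).toReal| +
        |(((a k' - f k' : ℝ)) : Real.Angle).toReal| < 2 * π / i := by
      have he : 2 * π / i = π / i + π / i := by ring
      rw [he]
      exact add_lt_add h1 h2
    linarith
  have hcard := Finset.card_le_card_of_injOn f hmaps hinj
  rw [Finset.card_range, Finset.card_erase_of_mem (B.min'_mem hne)] at hcard
  omega

/-! ### Points on the unit circle -/

noncomputable def pt (θ : ℝ) : EuclideanSpace ℝ (Fin 2) :=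
  (WithLp.equiv 2 (Fin 2 → ℝ)).symm ![Real.cos θ, Real.sin θ]

lemma pt_apply_zero (θ : ℝ) : pt θ 0 = Real.cos θ := rfl
lemma pt_apply_one (θ : ℝ) : pt θ 1 = Real.sin θ := rfl

lemma norm_pt (θ : ℝ) : ‖pt θ‖ = 1 := by
  rw [EuclideanSpace.norm_eq, Fin.sum_univ_two, pt_apply_zero, pt_apply_one]
  simp only [Real.norm_eq_abs, sq_abs]
  rw [show Real.cos θ ^ 2 + Real.sin θ ^ 2 = 1 from Real.cos_sq_add_sin_sq θ]
  exact Real.sqrt_one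

lemma inner_pt (θ ψ : ℝ) : ⟪pt θ, pt ψ⟫ = Real.cos (θ - ψ) := by
  rw [PiLp.inner_apply, Fin.sum_univ_two]
  simp only [RCLike.inner_apply, conj_trivial, pt_apply_zero, pt_apply_one]
  rw [Real.cos_sub]; ring

lemma pt_injective_aux {A B : ℝ} (h : pt A = pt B) : ∃ m : ℤ, A = B + 2 * π * m := by
  have hc : Real.cos A = Real.cos B := by
    rw [← pt_apply_zero, ← pt_apply_zero, h]
  have hs : Real.sin A = Real.sin B := by
    rw [← pt_apply_one, ← pt_apply_one, h]
  have he : Complex.exp (A * Complex.I) = Complex.exp (B * Complex.I) := by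
    rw [Complex.exp_mul_I, Complex.exp_mul_I]
    rw [show (Complex.cos A) = (Real.cos A : ℂ) from (Complex.ofReal_cos A).symm]
    rw [show (Complex.sin A) = (Real.sin A : ℂ) from (Complex.ofReal_sin A).symm]
    rw [show (Complex.cos B) = (Real.cos B : ℂ) from (Complex.ofReal_cos B).symm]
    rw [show (Complex.sin B) = (Real.sin B : ℂ) from (Complex.ofReal_sin B).symm]
    rw [hc, hs]
  rw [Complex.exp_eq_exp_iff_exists_int] at he
  obtain ⟨n, hn⟩ := he
  refine ⟨n, ?_⟩
  have hC : (A : ℂ) = ((B + 2 * π * n : ℝ) : ℂ) := by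
    push_cast
    have h2 : (A : ℂ) * Complex.I = ((B : ℂ) + 2 * π * n) * Complex.I := by
      linear_combination hn
    have := mul_right_cancel₀ Complex.I_ne_zero h2
    linear_combination this
  exact Complex.ofReal_injective hC

lemma pt_periodic (θ : ℝ) (m : ℤ) : pt (θ + 2 * π * m) = pt θ := by
  unfold pt
  congr 1
  have hc : Real.cos (θ + 2 * π * m) = Real.cos θ := by
    rw [show θ + 2 * π * m = θ + m * (2 * π) by ring]
    exact Real.cos_add_int_mul_two_pi θ m
  have hs : Real.sin (θ + 2 * π * m) = Real.sin θ := by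
    rw [show θ + 2 * π * m = θ + m * (2 * π) by ring]
    exact Real.sin_add_int_mul_two_pi θ m
  rw [hc, hs]

noncomputable def ang (q : EuclideanSpace ℝ (Fin 2)) : ℝ :=
  Complex.arg (Complex.mk (q 0) (q 1))

lemma polar (q : EuclideanSpace ℝ (Fin 2)) (hq : q ≠ 0) : q = ‖q‖ • pt (ang q) := by
  set z : ℂ := Complex.mk (q 0) (q 1) with hz
  have hre : z.re = q 0 := rfl
  have him : z.im = q 1 := rfl
  have hznz : z ≠ 0 := by
    intro h0
    apply hq
    have h1 : q 0 = 0 := by rw [← hre, h0]; rfl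
    have h2 : q 1 = 0 := by rw [← him, h0]; rfl
    ext j
    fin_cases j <;> simpa
  have habs : ‖z‖ = ‖q‖ := by
    rw [EuclideanSpace.norm_eq, Fin.sum_univ_two, Complex.norm_def, Complex.normSq_apply,
      hre, him]
    simp [Real.norm_eq_abs, sq_abs, pow_two]
  have hcos : Real.cos (ang q) = q 0 / ‖q‖ := by
    rw [ang, ← hz, Complex.cos_arg hznz, hre, habs]
  have hsin : Real.sin (ang q) = q 1 / ‖q‖ := by
    rw [ang, ← hz, Complex.sin_arg, him, habs]
  have hnq : ‖q‖ ≠ 0 := norm_ne_zero_iff.2 hq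
  ext j
  fin_cases j
  · show q 0 = (‖q‖ • pt (ang q)) 0
    rw [PiLp.smul_apply, pt_apply_zero, hcos, smul_eq_mul]
    field_simp
  · show q 1 = (‖q‖ • pt (ang q)) 1
    rw [PiLp.smul_apply, pt_apply_one, hsin, smul_eq_mul]
    field_simp

lemma mem_ball_iff (v u : EuclideanSpace ℝ (Fin 2)) (hu : ‖u‖ = 1) (T r : ℝ)
    (hT : 0 < T) (hr0 : 0 ≤ r) (hr2 : r ^ 2 = T ^ 2 - 1) :
    v ∈ Metric.closedBall (T • u) r ↔ ‖v‖ ^ 2 + 1 ≤ 2 * T * ⟪v, u⟫ := by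
  rw [Metric.mem_closedBall, dist_eq_norm,
    ← pow_le_pow_iff_left₀ (norm_nonneg _) hr0 (two_ne_zero), hr2, norm_sub_sq_real]
  have h1 : ⟪v, T • u⟫ = T * ⟪v, u⟫ := real_inner_smul_right v u T
  have h2 : ‖T • u‖ = T := by
    rw [norm_smul, hu, Real.norm_eq_abs, abs_of_pos hT, mul_one]
  rw [h1, h2]
  constructor <;> intro hx <;> nlinarith

lemma inner_pt_le (q : EuclideanSpace ℝ (Fin 2)) (α ct : ℝ) (hct0 : 0 ≤ ct)
    (hcos : Real.cos (α - ang q) ≤ ct) : ⟪q, pt α⟫ ≤ ct * ‖q‖ := by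
  rcases eq_or_ne q 0 with rfl | hq0
  · simp
  · conv_lhs => rw [polar q hq0]
    rw [real_inner_smul_left, inner_pt]
    have h1 : Real.cos (ang q - α) ≤ ct := by
      rw [show ang q - α = -(α - ang q) by ring, Real.cos_neg]; exact hcos
    calc ‖q‖ * Real.cos (ang q - α) ≤ ‖q‖ * ct :=
          mul_le_mul_of_nonneg_left h1 (norm_nonneg q)
      _ = ct * ‖q‖ := mul_comm _ _

/-- A disk in ℝ²: a closed ball with nonnegative radius. -/
def IsDisk (D : Set (EuclideanSpace ℝ (Fin 2))) : Prop :=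
  ∃ (c : EuclideanSpace ℝ (Fin 2)) (r : ℝ), 0 ≤ r ∧ D = Metric.closedBall c r

set_option maxHeartbeats 2000000 in
/-- Lower bound for weak ε-nets: for every `i ≥ 2`, no weak ε-net of size `i` with
`ε < 1/i` exists for closed disks, i.e. `ε_i^D ≥ 1/i` for weak ε-nets. -/
theorem weak_epsD_general_lower (i : ℕ) (hi : 2 ≤ i) (ε : ℝ) (hε0 : 0 ≤ ε)
    (hε : ε < 1 / (i : ℝ)) :
    ∃ P : Finset (EuclideanSpace ℝ (Fin 2)),
      ∀ N : Finset (EuclideanSpace ℝ (Fin 2)), N.card ≤ i →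
        ∃ D : Set (EuclideanSpace ℝ (Fin 2)), IsDisk D ∧ (∀ q ∈ N, q ∉ D) ∧
          ε * P.card < ((D ∩ ↑P).ncard : ℝ) := by
  classical
  have hi1 : 1 ≤ i := le_trans one_le_two hi
  have hipos : (0:ℝ) < i := by exact_mod_cast Nat.lt_of_lt_of_le Nat.zero_lt_two hi
  have hi2 : (2:ℝ) ≤ i := by exact_mod_cast hi
  have hpi := Real.pi_pos
  -- parameters
  set ct : ℝ := Real.cos (π / i) with hct
  set d : ℝ := (π / i + π * ε) / 2 with hd
  have hεlt : π * ε < π / i := by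
    have := mul_lt_mul_of_pos_left hε hpi
    rw [mul_one_div] at this
    exact this
  have hd0 : 0 < d := by
    have : 0 ≤ π * ε := by positivity
    have h1 : 0 < π / i := by positivity
    rw [hd]; linarith
  have hdlt : d < π / i := by rw [hd]; linarith
  have hpii2 : π / i ≤ π / 2 := by
    apply div_le_div_of_nonneg_left hpi.le (by norm_num) hi2
  have hct0 : 0 ≤ ct := by
    rw [hct]
    apply Real.cos_nonneg_of_mem_Icc
    constructor
    · have : 0 < π / i := by positivity
      linarith
    · exact hpii2
  set h : ℝ := Real.cos d with hh
  have hcth : ct < h := by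
    rw [hct, hh]
    exact Real.cos_lt_cos_of_nonneg_of_le_pi hd0.le (by linarith) hdlt
  have hh0 : 0 < h := lt_of_le_of_lt hct0 hcth
  have hh1 : h ≤ 1 := Real.cos_le_one d
  set T : ℝ := 1 / h with hT
  have hT0 : 0 < T := by positivity
  have hTh : T * h = 1 := by rw [hT]; field_simp
  have hT1 : 1 ≤ T := by
    rw [hT, le_div_iff₀ hh0]
    linarith
  have hr2nn : (0:ℝ) ≤ T^2 - 1 := by nlinarith
  set r : ℝ := Real.sqrt (T^2 - 1) with hr
  have hr0 : 0 ≤ r := Real.sqrt_nonneg _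
  have hr2 : r^2 = T^2 - 1 := Real.sq_sqrt hr2nn
  clear_value ct d h T r
  -- the number of points
  have hie : 0 < 1/(i:ℝ) - ε := by linarith
  set n : ℕ := ⌈(4:ℝ) / (1/(i:ℝ) - ε)⌉₊ + 1 with hn
  have hnpos : 0 < n := Nat.succ_pos _
  have hnR : (0:ℝ) < n := by exact_mod_cast hnpos
  have hn4 : 4 ≤ (n:ℝ) * (1/(i:ℝ) - ε) := by
    have h1 : (4:ℝ) / (1/(i:ℝ) - ε) ≤ (n:ℝ) := by
      rw [hn]
      push_cast
      have := Nat.le_ceil ((4:ℝ) / (1/(i:ℝ) - ε))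
      linarith
    have h2 := mul_le_mul_of_nonneg_right h1 hie.le
    rwa [div_mul_cancel₀ _ hie.ne'] at h2
  clear_value n
  -- the point set
  set P : Finset (EuclideanSpace ℝ (Fin 2)) :=
    (Finset.range n).image (fun k : ℕ => pt (2 * π * k / n)) with hP
  refine ⟨P, ?_⟩
  intro N hN
  -- choose the direction
  set B : Finset ℝ := N.image ang with hB
  have hBc : B.card ≤ i := le_trans (Finset.card_image_le) hN
  obtain ⟨α, hα⟩ := dir_exists i hi1 B hBc
  -- membership criterion
  have hmem : ∀ v : EuclideanSpace ℝ (Fin 2),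
      v ∈ Metric.closedBall (T • pt α) r ↔ ‖v‖^2 + 1 ≤ 2 * T * ⟪v, pt α⟫ :=
    fun v => mem_ball_iff v (pt α) (norm_pt α) T r hT0 hr0 hr2
  -- the disk avoids N
  have havoid : ∀ q ∈ N, q ∉ Metric.closedBall (T • pt α) r := by
    intro q hq hqD
    rw [hmem q] at hqD
    have hip : ⟪q, pt α⟫ ≤ ct * ‖q‖ :=
      inner_pt_le q α ct hct0 (by rw [hct]; exact hα (ang q) (Finset.mem_image_of_mem ang hq))
    have e1 : h * (2 * T * ⟪q, pt α⟫) = 2 * ⟪q, pt α⟫ := by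
      have e0 : h * (2 * T * ⟪q, pt α⟫) = 2 * ⟪q, pt α⟫ * (T * h) := by ring
      rw [e0, hTh, mul_one]
    have e2 : h * (‖q‖^2 + 1) ≤ 2 * ⟪q, pt α⟫ := by
      calc h * (‖q‖^2 + 1) ≤ h * (2 * T * ⟪q, pt α⟫) :=
            mul_le_mul_of_nonneg_left hqD hh0.le
        _ = 2 * ⟪q, pt α⟫ := e1
    have e3 : h * (‖q‖^2 + 1) ≤ 2 * (ct * ‖q‖) := by linarith
    have e4 := mul_le_mul_of_nonneg_left e3 hh0.le
    have e5 := sq_nonneg (h * ‖q‖ - ct)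
    have e6 : 0 < (h - ct) * (h + ct) := mul_pos (by linarith) (by linarith)
    nlinarith [e4, e5, e6]
  -- the captured points
  set A : ℤ := ⌈(n:ℝ) * (α - d) / (2*π)⌉ with hA
  set bb : ℤ := ⌊(n:ℝ) * (α + d) / (2*π)⌋ with hbb
  have hAle : (n:ℝ) * (α - d) / (2*π) ≤ A := Int.le_ceil _
  have hAlt : (A:ℝ) < (n:ℝ) * (α - d) / (2*π) + 1 := Int.ceil_lt_add_one _
  have hble : (bb:ℝ) ≤ (n:ℝ) * (α + d) / (2*π) := Int.floor_le _
  have hbgt : (n:ℝ) * (α + d) / (2*π) - 1 < (bb:ℝ) := Int.sub_one_lt_floor _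
  clear_value A bb
  have hcount : ε * n + 1 < (bb:ℝ) + 1 - A := by
    have key : (n:ℝ) * d / π = (n:ℝ) * (1/(i:ℝ) + ε) / 2 := by
      rw [div_eq_iff hpi.ne', hd]
      ring
    have h2 : (n:ℝ) * d / π - 1 < (bb:ℝ) + 1 - A := by
      have he : (n:ℝ)*(α+d)/(2*π) - ((n:ℝ)*(α-d)/(2*π)) = (n:ℝ) * d / π := by
        rw [div_sub_div_same, show (n:ℝ)*(α+d) - (n:ℝ)*(α-d) = 2*((n:ℝ)*d) by ring,
          mul_div_mul_left _ _ (two_ne_zero)]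
      linarith [hbgt, hAlt, he]
    have h3 : (n:ℝ) * (1/(i:ℝ) + ε) / 2 = (n:ℝ) * (1/(i:ℝ) - ε) / 2 + (n:ℝ) * ε := by ring
    linarith [key, h2, h3, hn4]
  have hbA : A ≤ bb := by
    have : (0:ℝ) < (bb:ℝ) + 1 - A := by linarith [hcount, mul_nonneg hε0 hnR.le]
    have : (A:ℝ) < (bb:ℝ) + 1 := by linarith
    exact_mod_cast (by exact_mod_cast Int.lt_add_one_iff.mp (by exact_mod_cast this))
  -- points in the window are within angle d of α
  have hwin : ∀ k : ℤ, k ∈ Finset.Icc A bb → |2 * π * k / n - α| ≤ d := by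
    intro k hk
    rw [Finset.mem_Icc] at hk
    have h1 : (A:ℝ) ≤ k := by exact_mod_cast hk.1
    have h2 : (k:ℝ) ≤ bb := by exact_mod_cast hk.2
    have hl : α - d ≤ 2 * π * k / n := by
      have := hAle.trans h1
      rw [div_le_iff₀ (by positivity : (0:ℝ) < 2*π)] at this
      rw [le_div_iff₀ hnR]
      nlinarith
    have hr' : 2 * π * k / n ≤ α + d := by
      have := h2.trans hble
      rw [le_div_iff₀ (by positivity : (0:ℝ) < 2*π)] at this
      rw [div_le_iff₀ hnR]
      nlinarith
    rw [abs_le]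
    constructor <;> linarith
  -- captured points are in the disk
  have hinD : ∀ k : ℤ, k ∈ Finset.Icc A bb → pt (2 * π * k / n) ∈ Metric.closedBall (T • pt α) r := by
    intro k hk
    rw [hmem, norm_pt, inner_pt]
    have habs := hwin k hk
    have : h ≤ Real.cos (2 * π * k / n - α) := by
      rw [hh, ← Real.cos_abs (2 * π * k / n - α)]
      apply Real.cos_le_cos_of_nonneg_of_le_pi (abs_nonneg _) (by linarith) habs
    nlinarith
  -- captured points are in P
  have hinP : ∀ k : ℤ, pt (2 * π * k / n) ∈ (P : Set (EuclideanSpace ℝ (Fin 2))) := by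
    intro k
    have hnz : (n:ℤ) ≠ 0 := by exact_mod_cast hnpos.ne'
    have hk0 : 0 ≤ k % n := Int.emod_nonneg k hnz
    have hkn : k % n < n := Int.emod_lt_of_pos k (by exact_mod_cast hnpos)
    have hdecomp : k = (n:ℤ) * (k / n) + k % n := (Int.mul_ediv_add_emod k n).symm
    have hangle : 2 * π * k / n = 2 * π * ((k % n : ℤ) : ℝ) / n + 2 * π * (k / n : ℤ) := by
      rw [div_add' _ _ _ hnR.ne']
      congr 1
      have : ((k:ℤ):ℝ) = (n:ℝ) * ((k / n : ℤ):ℝ) + ((k % n : ℤ):ℝ) := by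
        exact_mod_cast congrArg (fun z : ℤ => (z:ℝ)) hdecomp
      nlinarith [this]
    rw [hangle, pt_periodic]
    rw [hP]
    simp only [Finset.coe_image, Set.mem_image, Finset.mem_coe, Finset.mem_range]
    refine ⟨(k % n).toNat, by omega, ?_⟩
    congr 1
    have hc2 : (((k % (n:ℤ)).toNat : ℕ) : ℝ) = (((k % (n:ℤ)) : ℤ) : ℝ) := by
      exact_mod_cast Int.toNat_of_nonneg hk0
    rw [hc2]
  -- injectivity of the captured points
  have hinj : Set.InjOn (fun k : ℤ => pt (2 * π * k / n)) (Finset.Icc A bb) := by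
    intro k hk k' hk' heq
    simp only [Finset.coe_Icc, Set.mem_Icc] at hk hk'
    obtain ⟨m, hm⟩ := pt_injective_aux heq
    have hmn : (k:ℝ) = k' + m * n := by
      have h2π : (2 * π : ℝ) ≠ 0 := ne_of_gt (by positivity)
      rw [div_add' _ _ _ hnR.ne'] at hm
      rw [div_eq_div_iff hnR.ne' hnR.ne'] at hm
      have hcancel := mul_right_cancel₀ hnR.ne' hm
      have hfin : 2 * π * (k:ℝ) = 2 * π * ((k':ℝ) + m * n) := by linear_combination hcancel
      exact mul_left_cancel₀ h2π hfin
    have hmz : (k:ℤ) = k' + m * n := by exact_mod_cast hmn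
    -- window is shorter than n
    have hwd : (bb:ℝ) - A < n := by
      have hwin2 : (bb:ℝ) - A ≤ (n:ℝ) * d / π := by
        have he : (n:ℝ)*(α+d)/(2*π) - ((n:ℝ)*(α-d)/(2*π)) = (n:ℝ) * d / π := by
          rw [div_sub_div_same, show (n:ℝ)*(α+d) - (n:ℝ)*(α-d) = 2*((n:ℝ)*d) by ring,
            mul_div_mul_left _ _ (two_ne_zero)]
        nlinarith [hble, hAle]
      have : (n:ℝ) * d / π < (n:ℝ) / 2 := by
        rw [div_lt_div_iff₀ (by positivity) (by norm_num : (0:ℝ) < 2)]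
        have hd2 : d < π / 2 := lt_of_lt_of_le hdlt hpii2
        nlinarith
      linarith
    have hbnd : |(k:ℝ) - k'| < n := by
      rw [abs_lt]
      have h1 : (A:ℝ) ≤ k := by exact_mod_cast hk.1
      have h2 : (k:ℝ) ≤ bb := by exact_mod_cast hk.2
      have h3 : (A:ℝ) ≤ k' := by exact_mod_cast hk'.1
      have h4 : (k':ℝ) ≤ bb := by exact_mod_cast hk'.2
      constructor <;> linarith
    have hm0 : m = 0 := by
      by_contra hm0
      have : (1:ℝ) ≤ |(m:ℝ)| := by
        have : 1 ≤ |m| := Int.one_le_abs (by exact_mod_cast hm0)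
        exact_mod_cast this
      have : (n:ℝ) ≤ |(m:ℝ)| * n := by nlinarith
      have habs : |(k:ℝ) - k'| = |(m:ℝ)| * n := by
        rw [hmn]
        rw [show (k':ℝ) + m * n - k' = m * n by ring]
        rw [abs_mul, abs_of_pos hnR]
      linarith [habs ▸ hbnd]
    rw [hm0] at hmz
    simpa using hmz
  -- assemble
  refine ⟨Metric.closedBall (T • pt α) r, ⟨T • pt α, r, hr0, rfl⟩, havoid, ?_⟩
  set K : Finset (EuclideanSpace ℝ (Fin 2)) :=
    (Finset.Icc A bb).image (fun k : ℤ => pt (2 * π * k / n)) with hK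
  have hKcard : K.card = (Finset.Icc A bb).card := Finset.card_image_of_injOn hinj
  have hIcc : ((Finset.Icc A bb).card : ℝ) = (bb:ℝ) + 1 - A := by
    rw [Int.card_Icc]
    have h0 : 0 ≤ bb + 1 - A := by omega
    have hc2 : (((bb + 1 - A).toNat : ℕ) : ℝ) = (((bb + 1 - A) : ℤ) : ℝ) := by
      exact_mod_cast Int.toNat_of_nonneg h0
    rw [hc2]
    push_cast
    ring
  have hKsub : (K : Set (EuclideanSpace ℝ (Fin 2))) ⊆ Metric.closedBall (T • pt α) r ∩ ↑P := by
    intro x hx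
    simp only [hK, Finset.coe_image, Set.mem_image, Finset.mem_coe] at hx
    obtain ⟨k, hkmem, rfl⟩ := hx
    exact ⟨hinD k hkmem, hinP k⟩
  have hfin : (Metric.closedBall (T • pt α) r ∩ (P : Set (EuclideanSpace ℝ (Fin 2)))).Finite :=
    Set.Finite.inter_of_right (P.finite_toSet) (Metric.closedBall (T • pt α) r)
  have hle1 : K.card ≤ (Metric.closedBall (T • pt α) r ∩ (P : Set (EuclideanSpace ℝ (Fin 2)))).ncard := by
    rw [← Set.ncard_coe_finset K]
    exact Set.ncard_le_ncard hKsub hfin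
  have hPn : (P.card : ℝ) ≤ n := by
    have : P.card ≤ n := le_trans (Finset.card_image_le) (by rw [Finset.card_range])
    exact_mod_cast this
  calc ε * P.card ≤ ε * n := by apply mul_le_mul_of_nonneg_left hPn hε0
    _ < (K.card : ℝ) := by
        rw [hKcard, hIcc]
        linarith
    _ ≤ ((Metric.closedBall (T • pt α) r ∩ (P : Set (EuclideanSpace ℝ (Fin 2)))).ncard : ℝ) := by
        exact_mod_cast hle1
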